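/- Let Δ₃⁺(z) = (η(z)η(3z))^{12}, where η is the Dedekind eta function. For z = (1/√3)e^{iθ} with π/2 ≤ θ ≤ 23/10, one has 2.8964×10⁻⁴ < |Δ₃⁺(z)| < 1.0258×10⁻². -/

import Mathlib

open Complex Real

/-- The Dedekind eta function. -/
noncomputable def dedekindEta (z : ℂ) : ℂ :=
  Complex.exp (2 * (Real.pi : ℂ) * Complex.I * z / 24) *
    ∏' n : ℕ, (1 - Complex.exp (2 * (Real.pi : ℂ) * Complex.I * ((n : ℂ) + 1) * z))

/-- `Δ₃⁺(z) = (η(z)η(3z))^{12}`. -/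
noncomputable def Delta3Plus (z : ℂ) : ℂ := (dedekindEta z * dedekindEta (3 * z)) ^ 12

/- ### Auxiliary numeric exponential bounds -/

lemma pow8_le_exp {x c : ℝ} (hc : 0 ≤ c) (hx : 8 * c ≤ x) :
    (1+c+c^2/2+c^3/6+c^4/24+c^5/120+c^6/720+c^7/5040)^8 ≤ Real.exp x := by
  have h1 : (∑ i ∈ Finset.range 8, c ^ i / i.factorial) ≤ Real.exp c :=
    Real.sum_le_exp_of_nonneg hc 8
  have h2 : (∑ i ∈ Finset.range 8, c ^ i / (i.factorial : ℝ))
      = 1+c+c^2/2+c^3/6+c^4/24+c^5/120+c^6/720+c^7/5040 := by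
    simp [Finset.sum_range_succ, Nat.factorial]
  have h3 : Real.exp c ^ 8 ≤ Real.exp x := by
    rw [show (Real.exp c)^8 = Real.exp ((8:ℕ) * c) by rw [Real.exp_nat_mul]]
    exact Real.exp_le_exp.2 (by exact_mod_cast hx)
  calc (1+c+c^2/2+c^3/6+c^4/24+c^5/120+c^6/720+c^7/5040)^8
      ≤ Real.exp c ^ 8 := by
        apply pow_le_pow_left₀ (by positivity) (h2 ▸ h1)
    _ ≤ Real.exp x := h3

lemma exp_le_pow8 {x c : ℝ} (hc0 : 0 ≤ c) (hc1 : c ≤ 1) (hx : x ≤ 8 * c) :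
    Real.exp x ≤ (1+c+c^2/2+c^3/6+c^4/24+c^5/120+c^6/720+c^7/5040+c^8/35840)^8 := by
  have h1 : Real.exp c ≤ (∑ i ∈ Finset.range 8, c ^ i / i.factorial) + c^8*(8+1)/((8:ℕ).factorial * 8) :=
    Real.exp_bound' hc0 hc1 (by norm_num)
  have h2 : (∑ i ∈ Finset.range 8, c ^ i / (i.factorial:ℝ)) + c^8*(8+1)/((8:ℕ).factorial * 8)
      = 1+c+c^2/2+c^3/6+c^4/24+c^5/120+c^6/720+c^7/5040+c^8/35840 := by
    simp [Finset.sum_range_succ, Nat.factorial]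
    ring
  have h3 : Real.exp x ≤ Real.exp c ^ 8 := by
    rw [show (Real.exp c)^8 = Real.exp ((8:ℕ) * c) by rw [Real.exp_nat_mul]]
    exact Real.exp_le_exp.2 (by exact_mod_cast hx)
  exact h3.trans (pow_le_pow_left₀ (Real.exp_pos c).le (h2 ▸ h1) 8)

lemma exp_neg_le_num {x c b : ℝ} (hc0 : 0 ≤ c) (hb : 0 < b) (hx : 8*c ≤ x)
    (h : 1 ≤ b * (1+c+c^2/2+c^3/6+c^4/24+c^5/120+c^6/720+c^7/5040)^8) :
    Real.exp (-x) ≤ b := by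
  rw [Real.exp_neg]
  have hp := pow8_le_exp hc0 hx
  have h2 : 1 ≤ b * Real.exp x := h.trans (mul_le_mul_of_nonneg_left hp hb.le)
  nlinarith [mul_inv_cancel₀ (Real.exp_pos x).ne',
    mul_le_mul_of_nonneg_right h2 (inv_nonneg.2 (Real.exp_pos x).le)]

lemma le_exp_neg_num {x c b : ℝ} (hc0 : 0 ≤ c) (hc1 : c ≤ 1) (hb : 0 ≤ b) (hx : x ≤ 8*c)
    (h : b * (1+c+c^2/2+c^3/6+c^4/24+c^5/120+c^6/720+c^7/5040+c^8/35840)^8 ≤ 1) :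
    b ≤ Real.exp (-x) := by
  rw [Real.exp_neg]
  have hp := exp_le_pow8 hc0 hc1 hx
  have h2 : b * Real.exp x ≤ 1 := (mul_le_mul_of_nonneg_left hp hb).trans h
  nlinarith [Real.exp_pos x, mul_inv_cancel₀ (Real.exp_pos x).ne',
    mul_le_mul_of_nonneg_right h2 (inv_nonneg.2 (Real.exp_pos x).le)]

lemma helper_low {E c rl d : ℝ} (hc0 : 0 ≤ c) (hc1 : c ≤ 1) (hE : E ≤ 8*c) (hrl : 0 ≤ rl)
    (hd : 0 ≤ d)
    (h : d * (1+c+c^2/2+c^3/6+c^4/24+c^5/120+c^6/720+c^7/5040+c^8/35840)^8 ≤ rl^2) :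
    d ≤ rl^2 * Real.exp (-E) := by
  rw [Real.exp_neg]
  have hp := exp_le_pow8 hc0 hc1 hE
  have h2 : d * Real.exp E ≤ rl^2 := (mul_le_mul_of_nonneg_left hp hd).trans h
  nlinarith [Real.exp_pos E, mul_inv_cancel₀ (Real.exp_pos E).ne',
    mul_le_mul_of_nonneg_right h2 (inv_nonneg.2 (Real.exp_pos E).le)]

lemma helper_up {E c b u : ℝ} (hc0 : 0 ≤ c) (hc1 : c ≤ 1) (hE : E ≤ 8*c) (hb : 0 ≤ b)
    (h : b * (1+c+c^2/2+c^3/6+c^4/24+c^5/120+c^6/720+c^7/5040+c^8/35840)^8 ≤ u) :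
    b * Real.exp E ≤ u :=
  (mul_le_mul_of_nonneg_left (exp_le_pow8 hc0 hc1 hE) hb).trans h

/- ### Trigonometric numeric bounds -/

lemma cos_double_ge {u : ℝ} (h0 : 0 ≤ u) (h1 : u ≤ 1) :
    1 - 2*(u - u^3/6 + u^4*(5/96))^2 ≤ Real.cos (2*u) := by
  have hb := Real.sin_bound (x := u) (by rw [_root_.abs_of_nonneg h0]; exact h1)
  rw [_root_.abs_of_nonneg h0] at hb
  have hu3 : u^3 ≤ u := by nlinarith [sq_nonneg u, sq_nonneg (1-u), mul_nonneg h0 h0]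
  have habs : |Real.sin u| ≤ u - u^3/6 + u^4*(5/96) := by
    have h5 := abs_sub_abs_le_abs_sub (Real.sin u) (u - u^3/6)
    have h2 : |u - u^3/6| = u - u^3/6 := _root_.abs_of_nonneg (by linarith)
    nlinarith [mul_le_mul_of_nonneg_left h1 (pow_nonneg h0 4), pow_nonneg h0 4]
  have hsq : Real.sin u ^ 2 ≤ (u - u^3/6 + u^4*(5/96))^2 := by
    rw [← _root_.sq_abs]
    exact pow_le_pow_left₀ (abs_nonneg _) habs 2
  have h3 := Real.sin_sq_add_cos_sq u
  have h4 := Real.cos_two_mul u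
  nlinarith

lemma sin_lower {θ : ℝ} (h1 : Real.pi/2 ≤ θ) (h2 : θ ≤ 23/10) : 0.7444 ≤ Real.sin θ := by
  have hπlo : (3.1415926:ℝ) < π := by linarith [Real.pi_gt_d20]
  have heq : Real.sin θ = Real.cos (θ - π/2) := by
    rw [show θ - π/2 = -(π/2 - θ) by ring, Real.cos_neg, Real.cos_pi_div_two_sub]
  rw [heq]
  have hmon : Real.cos (0.7292038 : ℝ) ≤ Real.cos (θ - π/2) := by
    apply Real.cos_le_cos_of_nonneg_of_le_pi (by linarith)
    · linarith [Real.pi_gt_d20]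
    · linarith
  refine le_trans ?_ hmon
  have := cos_double_ge (u := 0.3646019) (by norm_num) (by norm_num)
  rw [show (2:ℝ) * 0.3646019 = 0.7292038 by norm_num] at this
  refine le_trans ?_ this
  norm_num

lemma cos_ubar_lb : (-0.7724113 : ℝ) ≤ Real.cos 2.4225105 := by
  have h1 := cos_double_ge (u := (2.4225105:ℝ)/4) (by norm_num) (by norm_num)
  rw [show (2:ℝ) * ((2.4225105:ℝ)/4) = 2.4225105/2 by norm_num] at h1
  have hc2 : (0.3373417:ℝ) ≤ Real.cos (2.4225105/2) := by
    refine le_trans ?_ h1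
    norm_num
  have h2 := Real.cos_two_mul ((2.4225105:ℝ)/2)
  rw [show (2:ℝ) * ((2.4225105:ℝ)/2) = 2.4225105 by norm_num] at h2
  nlinarith

/- ### Bounds for infinite products -/

lemma abs_tprod_bounds {f : ℕ → ℂ} {a ρ : ℝ} (ha : 0 ≤ a) (hρ0 : 0 ≤ ρ) (hρ1 : ρ < 1)
    (haρ : a * ρ ≤ 1/2) (hf : ∀ n, ‖f n‖ ≤ a * ρ^(n+1)) :
    Multipliable (fun n => 1 - f n) ∧
    Real.exp (-((1 + a*ρ/(2*(1-a*ρ))) * (a*ρ/(1-ρ)))) ≤ ‖∏' n : ℕ, (1 - f n)‖ ∧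
    ‖∏' n : ℕ, (1 - f n)‖ ≤ Real.exp ((1 + a*ρ/(2*(1-a*ρ))) * (a*ρ/(1-ρ))) := by
  set K := 1 + a*ρ/(2*(1-a*ρ)) with hK
  have haρ0 : 0 ≤ a * ρ := mul_nonneg ha hρ0
  have hden : (0:ℝ) < 1 - a*ρ := by linarith
  have hKpos : 0 < K := by
    have : 0 ≤ a*ρ/(2*(1-a*ρ)) := div_nonneg haρ0 (by linarith)
    simp only [hK]
    linarith
  have hflea : ∀ n, ‖f n‖ ≤ a * ρ := by
    intro n
    refine (hf n).trans ?_
    have : ρ^(n+1) ≤ ρ^1 := pow_le_pow_of_le_one hρ0 hρ1.le (by omega)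
    simpa using mul_le_mul_of_nonneg_left (by simpa using this) ha
  have hlt1 : ∀ n, ‖f n‖ < 1 := fun n => (hflea n).trans_lt (by linarith)
  have hne : ∀ n, (1 : ℂ) - f n ≠ 0 := by
    intro n h
    have h2 : f n = 1 := by linear_combination -h
    have := hlt1 n
    rw [h2] at this
    simp at this
  have hlog : ∀ n, ‖Complex.log (1 - f n)‖ ≤ K * (a * ρ^(n+1)) := by
    intro n
    have h1 : (1 : ℂ) - f n = 1 + (-(f n)) := by ring
    rw [h1]
    have hnorm : ‖-(f n)‖ < 1 := by
      rw [norm_neg]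
      simpa using hlt1 n
    have := Complex.norm_log_one_add_le hnorm
    rw [norm_neg] at this
    set t := ‖f n‖ with ht
    have ht0 : 0 ≤ t := norm_nonneg _
    have htle : t ≤ a * ρ := by simpa using hflea n
    have htle2 : t ≤ a * ρ^(n+1) := by simpa using hf n
    have hinv : (1 - t)⁻¹ ≤ (1 - a*ρ)⁻¹ := by
      apply inv_anti₀ <;> linarith
    have h2 : t^2 * (1-t)⁻¹ / 2 + t ≤ K * t := by
      rw [hK]
      have : t^2 * (1-t)⁻¹ ≤ t * (a*ρ * (1-a*ρ)⁻¹) := by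
        have := mul_le_mul htle hinv (inv_nonneg.2 (by linarith)) haρ0
        calc t^2 * (1-t)⁻¹ = t * (t * (1-t)⁻¹) := by ring
          _ ≤ t * (a*ρ * (1-a*ρ)⁻¹) := by
              apply mul_le_mul_of_nonneg_left this ht0
      have hKt : (1 + a * ρ / (2 * (1 - a * ρ)))*t = t + t*(a*ρ*(1-a*ρ)⁻¹)/2 := by
        field_simp
      linarith
    calc ‖Complex.log (1 + -(f n))‖ ≤ t^2 * (1-t)⁻¹ / 2 + t := by
          simpa [ht] using this
      _ ≤ K * t := h2
      _ ≤ K * (a * ρ^(n+1)) := mul_le_mul_of_nonneg_left htle2 hKpos.le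
  have hgeom : Summable (fun n : ℕ => K * (a * ρ^(n+1))) := by
    have : Summable (fun n : ℕ => (K * a * ρ) * ρ^n) :=
      (summable_geometric_of_lt_one hρ0 hρ1).mul_left _
    refine this.congr fun n => by ring
  have hsumnorm : Summable (fun n => ‖Complex.log (1 - f n)‖) :=
    Summable.of_nonneg_of_le (fun n => norm_nonneg _) hlog hgeom
  have hsum : Summable (fun n => Complex.log (1 - f n)) := hsumnorm.of_norm
  have hprod_eq : Complex.exp (∑' n : ℕ, Complex.log (1 - f n)) = ∏' n : ℕ, (1 - f n) := by
    exact Complex.cexp_tsum_eq_tprod (f := fun n => 1 - f n) hne hsum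
  have hmult : Multipliable (fun n => 1 - f n) :=
    Complex.multipliable_of_summable_log (f := fun n => 1 - f n) hsum
  have htsumgeom : ∑' n : ℕ, K * (a * ρ^(n+1)) = K * (a*ρ/(1-ρ)) := by
    have h1 : ∑' n : ℕ, K * (a * ρ^(n+1)) = ∑' n : ℕ, (K * a * ρ) * ρ^n :=
      tsum_congr fun n => by ring
    rw [h1, tsum_mul_left, tsum_geometric_of_lt_one hρ0 hρ1]
    field_simp
  have hre : |(∑' n : ℕ, Complex.log (1 - f n)).re| ≤ K * (a*ρ/(1-ρ)) := by
    refine (Complex.abs_re_le_norm _).trans ?_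
    refine le_trans ?_ (le_of_eq htsumgeom)
    have h1 : ‖∑' n : ℕ, Complex.log (1 - f n)‖
        = ‖∑' n : ℕ, Complex.log (1 - f n)‖ := rfl
    rw [h1]
    exact (norm_tsum_le_tsum_norm hsumnorm).trans (Summable.tsum_le_tsum hlog hsumnorm hgeom)
  have habs : ‖∏' n : ℕ, (1 - f n)‖
      = Real.exp ((∑' n : ℕ, Complex.log (1 - f n)).re) := by
    rw [← hprod_eq, Complex.norm_exp]
  rw [habs]
  obtain ⟨h1, h2⟩ := abs_le.1 hre
  exact ⟨hmult, Real.exp_le_exp.2 h1, Real.exp_le_exp.2 h2⟩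

/- ### Structural decomposition of Δ₃⁺ -/

lemma delta_decomp (z : ℂ) :
    Delta3Plus z = Complex.exp (2 * (Real.pi : ℂ) * Complex.I * z) ^ 2 *
      (∏' n : ℕ, (1 - (Complex.exp (2 * (Real.pi : ℂ) * Complex.I * z)) ^ (n+1))) ^ 12 *
      (∏' n : ℕ, (1 - ((Complex.exp (2 * (Real.pi : ℂ) * Complex.I * z)) ^ 3) ^ (n+1))) ^ 12 := by
  set w := 2 * (Real.pi : ℂ) * Complex.I * z with hw
  have hp1 : (∏' n : ℕ, (1 - Complex.exp (2 * (Real.pi : ℂ) * Complex.I * ((n : ℂ) + 1) * z)))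
      = ∏' n : ℕ, (1 - (Complex.exp w) ^ (n+1)) := by
    refine tprod_congr fun n => ?_
    congr 1
    rw [show 2 * (Real.pi : ℂ) * Complex.I * ((n : ℂ) + 1) * z = ((n+1 : ℕ) : ℂ) * w by
      push_cast; rw [hw]; ring]
    rw [Complex.exp_nat_mul]
  have hp3 : (∏' n : ℕ, (1 - Complex.exp (2 * (Real.pi : ℂ) * Complex.I * ((n : ℂ) + 1) * (3 * z))))
      = ∏' n : ℕ, (1 - ((Complex.exp w) ^ 3) ^ (n+1)) := by
    refine tprod_congr fun n => ?_
    congr 1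
    rw [show 2 * (Real.pi : ℂ) * Complex.I * ((n : ℂ) + 1) * (3 * z) = ((n+1 : ℕ) : ℂ) * (((3:ℕ):ℂ) * w) by
      push_cast; rw [hw]; ring]
    rw [Complex.exp_nat_mul, Complex.exp_nat_mul]
  have hsc : (Complex.exp (w / 24) * Complex.exp (2 * (Real.pi : ℂ) * Complex.I * (3 * z) / 24)) ^ 12
      = Complex.exp w ^ 2 := by
    rw [← Complex.exp_add]
    rw [show Complex.exp w ^ 2 = Complex.exp (((2:ℕ):ℂ) * w) by rw [Complex.exp_nat_mul]]
    rw [show (Complex.exp (w/24 + 2 * (Real.pi : ℂ) * Complex.I * (3 * z) / 24)) ^ 12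
        = Complex.exp (((12:ℕ):ℂ) * (w/24 + 2 * (Real.pi : ℂ) * Complex.I * (3 * z) / 24)) by
      rw [Complex.exp_nat_mul]]
    congr 1
    push_cast
    rw [hw]
    ring
  rw [Delta3Plus, dedekindEta, dedekindEta, hp1, hp3, ← hw]
  calc (Complex.exp (w/24) * (∏' n : ℕ, (1 - (Complex.exp w) ^ (n+1))) *
        (Complex.exp (2 * (Real.pi : ℂ) * Complex.I * (3 * z) / 24) * (∏' n : ℕ, (1 - ((Complex.exp w) ^ 3) ^ (n+1))))) ^ 12
      = (Complex.exp (w / 24) * Complex.exp (2 * (Real.pi : ℂ) * Complex.I * (3 * z) / 24)) ^ 12 *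
        (∏' n : ℕ, (1 - (Complex.exp w) ^ (n+1))) ^ 12 *
        (∏' n : ℕ, (1 - ((Complex.exp w) ^ 3) ^ (n+1))) ^ 12 := by ring
    _ = _ := by rw [hsc]

set_option maxHeartbeats 1600000 in
/-- For `z = (1/√3)e^{iθ}` with `π/2 ≤ θ ≤ 23/10`,
`2.8964×10⁻⁴ < |Δ₃⁺(z)| < 1.0258×10⁻²`. -/
theorem statement4 : ∀ θ : ℝ, Real.pi / 2 ≤ θ → θ ≤ 23 / 10 →
    0.00028964 < ‖Delta3Plus ((1 / (Real.sqrt 3 : ℂ)) * Complex.exp (Complex.I * θ))‖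
    ∧ ‖Delta3Plus ((1 / (Real.sqrt 3 : ℂ)) * Complex.exp (Complex.I * θ))‖
        < 0.010258 := by
  intro θ hθ1 hθ2
  have hπlo : (3.1415926:ℝ) < π := by linarith [Real.pi_gt_d20]
  have hπhi : π < 3.1415927 := by linarith [Real.pi_lt_d20]
  have hs3sq : Real.sqrt 3 ^ 2 = 3 := Real.sq_sqrt (by norm_num)
  have hs3nn : (0:ℝ) ≤ Real.sqrt 3 := Real.sqrt_nonneg 3
  have hs3lo : (1.7320508:ℝ) ≤ Real.sqrt 3 := by nlinarith
  have hs3hi : Real.sqrt 3 ≤ 1.7320509 := by nlinarith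
  have hs3pos : (0:ℝ) < Real.sqrt 3 := by linarith
  set z : ℂ := (1 / (Real.sqrt 3 : ℂ)) * Complex.exp (Complex.I * θ) with hz
  set w : ℂ := 2 * (Real.pi : ℂ) * Complex.I * z with hwdef
  set q : ℂ := Complex.exp w with hqdef
  -- real and imaginary parts
  have hexp : Complex.exp (Complex.I * θ)
      = ((Real.cos θ : ℝ) : ℂ) + ((Real.sin θ : ℝ) : ℂ) * I := by
    rw [mul_comm, Complex.exp_mul_I, Complex.ofReal_cos, Complex.ofReal_sin]
  have hz2 : z = ((Real.cos θ / Real.sqrt 3 : ℝ) : ℂ) + ((Real.sin θ / Real.sqrt 3 : ℝ) : ℂ) * I := by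
    rw [hz, hexp]
    push_cast
    ring
  have hw_re : w.re = -(2 * π * Real.sin θ / Real.sqrt 3) := by
    rw [hwdef, hz2]
    simp [Complex.mul_re, Complex.mul_im, Complex.sin_ofReal_re, Complex.cos_ofReal_re]
    ring
  have hw_im : w.im = 2 * π * Real.cos θ / Real.sqrt 3 := by
    rw [hwdef, hz2]
    simp [Complex.mul_re, Complex.mul_im, Complex.sin_ofReal_re, Complex.cos_ofReal_re]
    ring
  set R : ℝ := ‖q‖ with hRdef
  have hR : R = Real.exp w.re := by rw [hRdef, hqdef, Complex.norm_exp]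
  have hR0 : 0 < R := by rw [hR]; exact Real.exp_pos _
  -- trig bounds
  have hslo : (0.7444:ℝ) ≤ Real.sin θ := sin_lower hθ1 hθ2
  have hshi : Real.sin θ ≤ 1 := Real.sin_le_one θ
  have hcθ : Real.cos θ ≤ 0 :=
    Real.cos_nonpos_of_pi_div_two_le_of_le hθ1 (by linarith)
  have hcγ : -Real.cos θ ≤ 0.6678 := by
    nlinarith [Real.sin_sq_add_cos_sq θ]
  -- bounds on 2π/√3
  have hXL : (3.6275984:ℝ) ≤ 2*π/Real.sqrt 3 := by
    rw [le_div_iff₀ hs3pos]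
    nlinarith
  have hXH : 2*π/Real.sqrt 3 ≤ 3.6275988 := by
    rw [div_le_iff₀ hs3pos]
    nlinarith
  have hwre_eq : w.re = -((2*π/Real.sqrt 3) * Real.sin θ) := by
    rw [hw_re]; ring
  -- global upper bound on R : R ≤ RHO = 0.0671798
  have hXs_lo : (8:ℝ) * (84387/250000) ≤ (2*π/Real.sqrt 3) * Real.sin θ := by
    nlinarith
  have hRhi : R ≤ 0.0671798 := by
    rw [hR, hwre_eq]
    refine le_trans (Real.exp_le_exp.2 (neg_le_neg hXs_lo)) ?_
    exact exp_neg_le_num (by norm_num) (by norm_num) le_rfl (by norm_num)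
  have hR0' : (0:ℝ) ≤ R := hR0.le
  -- infinite product pieces
  have hD := delta_decomp z
  rw [← hwdef, ← hqdef] at hD
  -- global product bounds with ρ = RHO
  have hfq : ∀ n : ℕ, ‖q^(n+1)‖ ≤ 1 * (0.0671798:ℝ)^(n+1) := by
    intro n
    rw [norm_pow, one_mul]
    exact pow_le_pow_left₀ (norm_nonneg q) hRhi _
  obtain ⟨hm1, hA1lo, _⟩ := abs_tprod_bounds (f := fun n => q^(n+1)) (a := 1) (ρ := 0.0671798)
    (by norm_num) (by norm_num) (by norm_num) (by norm_num) hfq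
  have hfq3 : ∀ n : ℕ, ‖(q^3)^(n+1)‖ ≤ 1 * ((0.0671798:ℝ)^3)^(n+1) := by
    intro n
    rw [norm_pow, one_mul, norm_pow]
    refine pow_le_pow_left₀ (by positivity) ?_ _
    exact pow_le_pow_left₀ (norm_nonneg q) hRhi _
  obtain ⟨_, hA3lo, hA3hi⟩ := abs_tprod_bounds (f := fun n => (q^3)^(n+1)) (a := 1)
    (ρ := (0.0671798:ℝ)^3) (by norm_num) (by norm_num) (by norm_num) (by norm_num) hfq3
  have hfqt : ∀ n : ℕ, ‖q^(n+1+1)‖ ≤ (0.0671798:ℝ) * (0.0671798:ℝ)^(n+1) := by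
    intro n
    rw [norm_pow]
    calc ‖q‖ ^ (n+1+1) ≤ (0.0671798:ℝ)^(n+1+1) :=
          pow_le_pow_left₀ (norm_nonneg q) hRhi _
      _ = (0.0671798:ℝ) * (0.0671798:ℝ)^(n+1) := by ring
  obtain ⟨hmt, _, hAthi⟩ := abs_tprod_bounds (f := fun n => q^(n+1+1)) (a := 0.0671798)
    (ρ := 0.0671798) (by norm_num) (by norm_num) (by norm_num) (by norm_num) hfqt
  -- head split
  have hsplit : (∏' n : ℕ, (1 - q^(n+1))) = (1 - q) * ∏' n : ℕ, (1 - q^(n+1+1)) := by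
    have h := tprod_eq_zero_mul' (f := fun n : ℕ => 1 - q^(n+1)) hmt
    rw [h]
    simp only [zero_add, pow_one]
  -- |Δ| in factored form
  have habsD : ‖Delta3Plus z‖
      = R^2 * (‖∏' n : ℕ, (1 - q^(n+1))‖)^12 *
        (‖∏' n : ℕ, (1 - (q^3)^(n+1))‖)^12 := by
    rw [hD, norm_mul, norm_mul, norm_pow, norm_pow, norm_pow, hRdef]
  constructor
  · -- LOWER BOUND
    rcases le_total (Real.sin θ) 0.9844 with hcase | hcase
    · -- case A : sin θ ≤ 0.9844, R ≥ 0.0281274, products via ρ = 0.0671798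
      have hXs_hi : (2*π/Real.sqrt 3) * Real.sin θ ≤ 8 * (4463761/10000000 : ℝ) := by
        have h := mul_le_mul hXH hcase (by linarith) (by norm_num)
        linarith
      have hRlo : (0.0281274:ℝ) ≤ R := by
        rw [hR, hwre_eq]
        refine le_trans ?_ (Real.exp_le_exp.2 (neg_le_neg hXs_hi))
        exact le_exp_neg_num (by norm_num) (by norm_num) (by norm_num) le_rfl (by norm_num)
      have key : (0.0002896401:ℝ) ≤ (0.0281274:ℝ)^2 * Real.exp (-(0.8989749 : ℝ)) :=
        helper_low (c := 0.1123719) (by norm_num) (by norm_num) (by norm_num) (by norm_num)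
          (by norm_num) (by norm_num)
      have hexps : Real.exp (-(0.8989749:ℝ))
          ≤ Real.exp (-((1 + 1*(0.0671798:ℝ)/(2*(1-1*0.0671798))) * (1*0.0671798/(1-0.0671798))))^12 *
            Real.exp (-((1 + 1*((0.0671798:ℝ)^3)/(2*(1-1*(0.0671798:ℝ)^3))) * (1*(0.0671798:ℝ)^3/(1-(0.0671798:ℝ)^3))))^12 := by
        rw [← Real.exp_nat_mul, ← Real.exp_nat_mul, ← Real.exp_add]
        apply Real.exp_le_exp.2
        push_cast
        norm_num
      have hR2 : (0.0281274:ℝ)^2 ≤ R^2 := pow_le_pow_left₀ (by norm_num) hRlo 2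
      have e1 := pow_le_pow_left₀ (Real.exp_pos _).le hA1lo 12
      have e3 := pow_le_pow_left₀ (Real.exp_pos _).le hA3lo 12
      calc (0.00028964:ℝ) < 0.0002896401 := by norm_num
        _ ≤ (0.0281274:ℝ)^2 * Real.exp (-(0.8989749:ℝ)) := key
        _ ≤ R^2 * (Real.exp (-((1 + 1*(0.0671798:ℝ)/(2*(1-1*0.0671798))) * (1*0.0671798/(1-0.0671798))))^12 *
              Real.exp (-((1 + 1*((0.0671798:ℝ)^3)/(2*(1-1*(0.0671798:ℝ)^3))) * (1*(0.0671798:ℝ)^3/(1-(0.0671798:ℝ)^3))))^12) :=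
            mul_le_mul hR2 hexps (Real.exp_pos _).le (by positivity)
        _ = R^2 * Real.exp (-((1 + 1*(0.0671798:ℝ)/(2*(1-1*0.0671798))) * (1*0.0671798/(1-0.0671798))))^12 *
              Real.exp (-((1 + 1*((0.0671798:ℝ)^3)/(2*(1-1*(0.0671798:ℝ)^3))) * (1*(0.0671798:ℝ)^3/(1-(0.0671798:ℝ)^3))))^12 := by
            ring
        _ ≤ R^2 * (‖∏' n : ℕ, (1 - q^(n+1))‖)^12 *
              (‖∏' n : ℕ, (1 - (q^3)^(n+1))‖)^12 :=
            mul_le_mul (mul_le_mul le_rfl e1 (by positivity) (by positivity)) e3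
              (by positivity) (by positivity)
        _ = ‖Delta3Plus z‖ := habsD.symm
    · -- case B : 0.9844 ≤ sin θ, R ∈ [0.0265799, 0.0281276]
      have hXs_loB : (8:ℝ) * (4463759/10000000) ≤ (2*π/Real.sqrt 3) * Real.sin θ := by
        have h := mul_le_mul hXL hcase (by norm_num) (by positivity)
        linarith
      have hRhiB : R ≤ 0.0281276 := by
        rw [hR, hwre_eq]
        refine le_trans (Real.exp_le_exp.2 (neg_le_neg hXs_loB)) ?_
        exact exp_neg_le_num (by norm_num) (by norm_num) le_rfl (by norm_num)
      have hXs_hiB : (2*π/Real.sqrt 3) * Real.sin θ ≤ 8 * (4534499/10000000 : ℝ) := by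
        have h := mul_le_mul hXH hshi (by linarith) (by norm_num)
        linarith
      have hRloB : (0.0265799:ℝ) ≤ R := by
        rw [hR, hwre_eq]
        refine le_trans ?_ (Real.exp_le_exp.2 (neg_le_neg hXs_hiB))
        exact le_exp_neg_num (by norm_num) (by norm_num) (by norm_num) le_rfl (by norm_num)
      have hfqB : ∀ n : ℕ, ‖q^(n+1)‖ ≤ 1 * (0.0281276:ℝ)^(n+1) := by
        intro n
        rw [norm_pow, one_mul]
        exact pow_le_pow_left₀ (norm_nonneg q) hRhiB _
      obtain ⟨_, hA1loB, _⟩ := abs_tprod_bounds (f := fun n => q^(n+1)) (a := 1) (ρ := 0.0281276)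
        (by norm_num) (by norm_num) (by norm_num) (by norm_num) hfqB
      have hfq3B : ∀ n : ℕ, ‖(q^3)^(n+1)‖ ≤ 1 * ((0.0281276:ℝ)^3)^(n+1) := by
        intro n
        rw [norm_pow, one_mul, norm_pow]
        refine pow_le_pow_left₀ (by positivity) ?_ _
        exact pow_le_pow_left₀ (norm_nonneg q) hRhiB _
      obtain ⟨_, hA3loB, _⟩ := abs_tprod_bounds (f := fun n => (q^3)^(n+1)) (a := 1)
        (ρ := (0.0281276:ℝ)^3) (by norm_num) (by norm_num) (by norm_num) (by norm_num) hfq3B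
      have key : (0.0002896401:ℝ) ≤ (0.0265799:ℝ)^2 * Real.exp (-(0.3525927 : ℝ)) :=
        helper_low (c := 0.0440741) (by norm_num) (by norm_num) (by norm_num) (by norm_num)
          (by norm_num) (by norm_num)
      have hexps : Real.exp (-(0.3525927:ℝ))
          ≤ Real.exp (-((1 + 1*(0.0281276:ℝ)/(2*(1-1*0.0281276))) * (1*0.0281276/(1-0.0281276))))^12 *
            Real.exp (-((1 + 1*((0.0281276:ℝ)^3)/(2*(1-1*(0.0281276:ℝ)^3))) * (1*(0.0281276:ℝ)^3/(1-(0.0281276:ℝ)^3))))^12 := by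
        rw [← Real.exp_nat_mul, ← Real.exp_nat_mul, ← Real.exp_add]
        apply Real.exp_le_exp.2
        push_cast
        norm_num
      have hR2 : (0.0265799:ℝ)^2 ≤ R^2 := pow_le_pow_left₀ (by norm_num) hRloB 2
      have e1 := pow_le_pow_left₀ (Real.exp_pos _).le hA1loB 12
      have e3 := pow_le_pow_left₀ (Real.exp_pos _).le hA3loB 12
      calc (0.00028964:ℝ) < 0.0002896401 := by norm_num
        _ ≤ (0.0265799:ℝ)^2 * Real.exp (-(0.3525927:ℝ)) := key
        _ ≤ R^2 * (Real.exp (-((1 + 1*(0.0281276:ℝ)/(2*(1-1*0.0281276))) * (1*0.0281276/(1-0.0281276))))^12 *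
              Real.exp (-((1 + 1*((0.0281276:ℝ)^3)/(2*(1-1*(0.0281276:ℝ)^3))) * (1*(0.0281276:ℝ)^3/(1-(0.0281276:ℝ)^3))))^12) :=
            mul_le_mul hR2 hexps (Real.exp_pos _).le (by positivity)
        _ = R^2 * Real.exp (-((1 + 1*(0.0281276:ℝ)/(2*(1-1*0.0281276))) * (1*0.0281276/(1-0.0281276))))^12 *
              Real.exp (-((1 + 1*((0.0281276:ℝ)^3)/(2*(1-1*(0.0281276:ℝ)^3))) * (1*(0.0281276:ℝ)^3/(1-(0.0281276:ℝ)^3))))^12 := by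
            ring
        _ ≤ R^2 * (‖∏' n : ℕ, (1 - q^(n+1))‖)^12 *
              (‖∏' n : ℕ, (1 - (q^3)^(n+1))‖)^12 :=
            mul_le_mul (mul_le_mul le_rfl e1 (by positivity) (by positivity)) e3
              (by positivity) (by positivity)
        _ = ‖Delta3Plus z‖ := habsD.symm
  · -- UPPER BOUND
    have hqre : q.re = R * Real.cos w.im := by rw [hR, hqdef, Complex.exp_re]
    have hcos_wim : (-0.7724113:ℝ) ≤ Real.cos w.im := by
      have hveq : -w.im = (2*π/Real.sqrt 3) * (-Real.cos θ) := by rw [hw_im]; ring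
      have hv0 : 0 ≤ -w.im := by
        rw [hveq]
        exact mul_nonneg (by positivity) (by linarith)
      have hvub : -w.im ≤ 2.4225105 := by
        rw [hveq]
        calc (2*π/Real.sqrt 3) * (-Real.cos θ) ≤ 3.6275988 * 0.6678 :=
              mul_le_mul hXH hcγ (by linarith) (by norm_num)
          _ ≤ 2.4225105 := by norm_num
      have hcn : Real.cos w.im = Real.cos (-w.im) := (Real.cos_neg w.im).symm
      rw [hcn]
      exact le_trans cos_ubar_lb
        (Real.cos_le_cos_of_nonneg_of_le_pi hv0 (by linarith) hvub)
    have hR2 : R^2 ≤ (0.0671798:ℝ)^2 := pow_le_pow_left₀ hR0' hRhi 2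
    have hsqabs : (‖1-q‖)^2 ≤ 1 + 2*0.7724113*0.0671798 + (0.0671798:ℝ)^2 := by
      have h1 : (‖1-q‖)^2 = 1 - 2*q.re + R^2 := by
        have h2 : R^2 = q.re^2 + q.im^2 := by
          rw [hRdef, Complex.sq_norm, Complex.normSq_apply]
          ring
        rw [Complex.sq_norm, Complex.normSq_apply]
        simp only [Complex.sub_re, Complex.sub_im, Complex.one_re, Complex.one_im]
        linear_combination -h2
      have hCR : (0.7724113:ℝ)*R ≤ 0.7724113*0.0671798 := by linarith
      have hqre_lb : -((0.7724113:ℝ)*R) ≤ q.re := by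
        rw [hqre]
        have := mul_le_mul_of_nonneg_left hcos_wim hR0'
        linarith
      linarith
    have hsq6 : (‖1-q‖)^12 ≤ (1 + 2*0.7724113*0.0671798 + (0.0671798:ℝ)^2)^6 := by
      calc (‖1-q‖)^12 = ((‖1-q‖)^2)^6 := by ring
        _ ≤ _ := pow_le_pow_left₀ (sq_nonneg _) hsqabs 6
    have hA1up : (‖∏' n : ℕ, (1 - q^(n+1))‖)^12
        ≤ (1 + 2*0.7724113*0.0671798 + (0.0671798:ℝ)^2)^6 *
          Real.exp ((1 + (0.0671798:ℝ)*0.0671798/(2*(1-(0.0671798:ℝ)*0.0671798))) * ((0.0671798:ℝ)*0.0671798/(1-0.0671798)))^12 := by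
      rw [hsplit, norm_mul, mul_pow]
      exact mul_le_mul hsq6 (pow_le_pow_left₀ (norm_nonneg _) hAthi 12)
        (by positivity) (by positivity)
    have hA3up := pow_le_pow_left₀ (norm_nonneg _) hA3hi 12
    have hexpcomb : Real.exp ((1 + (0.0671798:ℝ)*0.0671798/(2*(1-(0.0671798:ℝ)*0.0671798))) * ((0.0671798:ℝ)*0.0671798/(1-0.0671798)))^12 *
        Real.exp ((1 + 1*((0.0671798:ℝ)^3)/(2*(1-1*(0.0671798:ℝ)^3))) * (1*(0.0671798:ℝ)^3/(1-(0.0671798:ℝ)^3)))^12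
        ≤ Real.exp (0.0618294:ℝ) := by
      rw [← Real.exp_nat_mul, ← Real.exp_nat_mul, ← Real.exp_add]
      apply Real.exp_le_exp.2
      push_cast
      norm_num
    have hfinal : ((0.0671798:ℝ)^2 * (1 + 2*0.7724113*0.0671798 + (0.0671798:ℝ)^2)^6) *
        Real.exp (0.0618294:ℝ) ≤ 0.0102579 :=
      helper_up (c := 0.0077287) (by norm_num) (by norm_num) (by norm_num) (by positivity)
        (by norm_num)
    calc ‖Delta3Plus z‖
        = R^2 * (‖∏' n : ℕ, (1 - q^(n+1))‖)^12 *
          (‖∏' n : ℕ, (1 - (q^3)^(n+1))‖)^12 := habsD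
      _ ≤ (0.0671798:ℝ)^2 * ((1 + 2*0.7724113*0.0671798 + (0.0671798:ℝ)^2)^6 *
            Real.exp ((1 + (0.0671798:ℝ)*0.0671798/(2*(1-(0.0671798:ℝ)*0.0671798))) * ((0.0671798:ℝ)*0.0671798/(1-0.0671798)))^12) *
          Real.exp ((1 + 1*((0.0671798:ℝ)^3)/(2*(1-1*(0.0671798:ℝ)^3))) * (1*(0.0671798:ℝ)^3/(1-(0.0671798:ℝ)^3)))^12 :=
          mul_le_mul (mul_le_mul hR2 hA1up (by positivity) (by norm_num)) hA3up
            (by positivity) (by positivity)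
      _ = ((0.0671798:ℝ)^2 * (1 + 2*0.7724113*0.0671798 + (0.0671798:ℝ)^2)^6) *
          (Real.exp ((1 + (0.0671798:ℝ)*0.0671798/(2*(1-(0.0671798:ℝ)*0.0671798))) * ((0.0671798:ℝ)*0.0671798/(1-0.0671798)))^12 *
           Real.exp ((1 + 1*((0.0671798:ℝ)^3)/(2*(1-1*(0.0671798:ℝ)^3))) * (1*(0.0671798:ℝ)^3/(1-(0.0671798:ℝ)^3)))^12) := by
          ring
      _ ≤ ((0.0671798:ℝ)^2 * (1 + 2*0.7724113*0.0671798 + (0.0671798:ℝ)^2)^6) *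
          Real.exp (0.0618294:ℝ) :=
          mul_le_mul_of_nonneg_left hexpcomb (by positivity)
      _ ≤ 0.0102579 := hfinal
      _ < 0.010258 := by norm_num
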